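/- Let α > 1 and q > 2 with α ≠ 1 + 1/q, and 1 < α < 1 + 1/q. Then for all n ≥ 1, ∫_{-∞}^0 |(1-s)^{1-α} - (n-s)^{1-α}|^q ds ≤ C n^{q(1-α)+1}, where C depends only on α and q. -/

import Mathlib

open MeasureTheory Real Set Filter

private lemma bern_neg {t p : ℝ} (ht : 0 ≤ t) (hp1 : -1 ≤ p) (hp2 : p ≤ 0) :
    1 + p * t ≤ (1 + t) ^ p := by
  have h1 : (0:ℝ) < 1 + t := by linarith
  rcases le_or_gt (1 + p * t) 0 with h | h
  · exact h.trans (rpow_pos_of_pos h1 p).le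
  · have h2 : (1 + t) ^ (-p) ≤ 1 + (-p) * t :=
      rpow_one_add_le_one_add_mul_self (by linarith) (by linarith) (by linarith)
    have h3 : (1 + t) ^ p = ((1 + t) ^ (-p))⁻¹ := by
      rw [← rpow_neg h1.le, neg_neg]
    have hpos : (0:ℝ) < (1 + t) ^ (-p) := rpow_pos_of_pos h1 _
    have h4 : (0:ℝ) < 1 + (-p) * t := hpos.trans_le h2
    have h5 : (1 + (-p) * t)⁻¹ ≤ ((1 + t) ^ (-p))⁻¹ := inv_anti₀ hpos h2
    have h6 : 1 + p * t ≤ (1 + (-p) * t)⁻¹ := by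
      rw [inv_eq_one_div, le_div_iff₀ h4]
      nlinarith [sq_nonneg (p*t)]
    rw [h3]
    exact h6.trans h5

private lemma aux_Ioi {p : ℝ} (hp : p < -1) {c : ℝ} (hc : 0 < c) :
    IntegrableOn (fun u : ℝ => (1 + u) ^ p) (Ioi c) ∧
      ∫ u in Ioi c, (1 + u) ^ p = -((1 + c) ^ (p + 1) / (p + 1)) := by
  have hmeas : AEStronglyMeasurable (fun u : ℝ => (1 + u) ^ p)
      (volume.restrict (Ioi c)) := by
    apply Measurable.aestronglyMeasurable
    fun_prop
  have hint : IntegrableOn (fun u : ℝ => (1 + u) ^ p) (Ioi c) := by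
    refine Integrable.mono' (integrableOn_Ioi_rpow_of_lt hp hc) hmeas ?_
    filter_upwards [ae_restrict_mem measurableSet_Ioi] with u hu
    have hu0 : 0 < u := hc.trans hu
    rw [Real.norm_eq_abs, abs_of_nonneg (rpow_nonneg (by linarith) p)]
    exact rpow_le_rpow_of_nonpos hu0 (by linarith) (by linarith)
  have hd : ∀ x ∈ Ici c, HasDerivAt (fun u : ℝ => (1 + u) ^ (p + 1) / (p + 1))
      ((1 + x) ^ p) x := by
    intro x hx
    have hx0 : (0:ℝ) < 1 + x := by have := hc.trans_le hx; linarith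
    have h1 : HasDerivAt (fun u : ℝ => 1 + u) 1 x := (hasDerivAt_id x).const_add 1
    have h2 := (Real.hasDerivAt_rpow_const (p := p + 1) (Or.inl hx0.ne')).comp x h1
    have h3 := h2.div_const (p + 1)
    refine HasDerivAt.congr_deriv h3 ?_
    rw [add_sub_cancel_right, mul_one, mul_div_right_comm, div_self (show p + 1 ≠ 0 by linarith), one_mul]
  have ht : Tendsto (fun u : ℝ => (1 + u) ^ (p + 1) / (p + 1)) atTop (nhds (0 / (p + 1))) := by
    apply Tendsto.div_const
    have h1 : Tendsto (fun u : ℝ => 1 + u) atTop atTop :=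
      tendsto_atTop_add_const_left _ 1 tendsto_id
    have h2 : Tendsto (fun y : ℝ => y ^ (p + 1)) atTop (nhds 0) := by
      simpa only [neg_neg] using tendsto_rpow_neg_atTop (by linarith : 0 < -(p + 1))
    exact h2.comp h1
  refine ⟨hint, ?_⟩
  rw [integral_Ioi_of_hasDerivAt_of_tendsto' hd hint ht]
  ring

private lemma aux_Iic {p : ℝ} (hp : p < -1) {b : ℝ} (hb : b < 0) :
    IntegrableOn (fun s : ℝ => (1 - s) ^ p) (Iic b) ∧
      ∫ s in Iic b, (1 - s) ^ p = -((1 - b) ^ (p + 1) / (p + 1)) := by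
  obtain ⟨hint, hval⟩ := aux_Ioi hp (show (0:ℝ) < -b by linarith)
  have heq : (fun s : ℝ => (1 - s) ^ p) = fun s : ℝ => (1 + (-s)) ^ p := by
    funext s; rw [sub_eq_add_neg]
  have A : MeasurableEmbedding fun x : ℝ => -x :=
    (Homeomorph.neg ℝ).isClosedEmbedding.measurableEmbedding
  constructor
  · rw [heq]
    have hint' : IntegrableOn (fun u : ℝ => (1 + u) ^ p) (Ici (-b)) := by
      rwa [integrableOn_Ici_iff_integrableOn_Ioi]
    have : volume.restrict (Iic b) =
        Measure.map (fun x : ℝ => -x) (volume.restrict (Ici (-b))) := by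
      rw [← Measure.map_neg_eq_self (volume : Measure ℝ), A.restrict_map]
      congr 1
      · simp
    unfold IntegrableOn
    rw [this, A.integrable_map_iff]
    exact hint'.congr_fun (fun x _ => by simp) measurableSet_Ici
  · rw [heq, integral_comp_neg_Iic b (fun u : ℝ => (1 + u) ^ p), hval, sub_eq_add_neg]

set_option maxHeartbeats 1000000 in
theorem stmt_6 (α q : ℝ) (hq : 2 < q) (hα1 : 1 < α) (hα2 : α < 1 + 1 / q)
    (hαne : α ≠ 1 + 1 / q) :
    ∃ C : ℝ, ∀ n : ℕ, 1 ≤ n →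
      (∫ s in Iic (0:ℝ), |(1 - s) ^ (1 - α) - ((n : ℝ) - s) ^ (1 - α)| ^ q) ≤
        C * (n : ℝ) ^ (q * (1 - α) + 1) := by
  have hq0 : (0:ℝ) < q := by linarith
  have h1q : 1 / q < 1 / 2 := by
    apply one_div_lt_one_div_of_lt <;> linarith
  have hα3 : α < 2 := by linarith
  have hr1 : 1 - α < 0 := by linarith
  have hr2 : (-1:ℝ) ≤ 1 - α := by linarith
  have hqq : q * (1 + 1/q) = q + 1 := by field_simp
  have hp1 : -1 < q * (1 - α) := by nlinarith
  have hp1' : q * (1 - α) < 0 := mul_neg_of_pos_of_neg hq0 hr1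
  set e : ℝ := q * (1 - α) + 1 with he_def
  have he : 0 < e := by simp only [he_def]; linarith
  have hαq : 1 < α * q := by nlinarith
  have hD : 0 < α * q - 1 := by linarith
  have hp2 : -(α * q) < -1 := by linarith
  refine ⟨2 ^ e / e + (α - 1) ^ q / (α * q - 1), ?_⟩
  intro n hn
  set N : ℝ := (n : ℝ) with hN
  have hN1 : (1:ℝ) ≤ N := by rw [hN]; exact_mod_cast hn
  have hN0 : (0:ℝ) < N := by linarith
  set p2 : ℝ := -(α * q) with hp2def
  have hp2e : p2 + 1 = -(α * q - 1) := by rw [hp2def]; ring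
  set g : ℝ → ℝ :=
    fun s => if s ≤ -N then ((α - 1) * N) ^ q * (1 - s) ^ p2 else (1 - s) ^ (q * (1 - α))
    with hg
  -- integrability and value on (-∞, -N]
  obtain ⟨hint2, hval2⟩ := aux_Iic (show p2 < -1 from hp2) (show -N < 0 by linarith)
  have hint2g : IntegrableOn g (Iic (-N)) := by
    refine IntegrableOn.congr_fun (hint2.const_mul (((α - 1) * N) ^ q)) ?_ measurableSet_Iic
    intro s hs
    simp only [hg, if_pos (mem_Iic.mp hs)]
  -- integrability on (-N, 0]
  have hcont : ContinuousOn (fun s : ℝ => (1 - s) ^ (q * (1 - α))) (Icc (-N) 0) := by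
    apply ContinuousOn.rpow_const (continuous_const.sub continuous_id).continuousOn
    intro x hx
    rw [mem_Icc] at hx
    left
    simp only [Pi.sub_apply, id_eq]
    intro h
    linarith [hx.2]
  have hint1 : IntegrableOn (fun s : ℝ => (1 - s) ^ (q * (1 - α))) (Ioc (-N) 0) :=
    (hcont.integrableOn_Icc).mono_set Ioc_subset_Icc_self
  have hint1g : IntegrableOn g (Ioc (-N) 0) := by
    refine hint1.congr_fun ?_ measurableSet_Ioc
    intro s hs
    simp only [hg, if_neg (not_le.mpr hs.1)]
  have hunion : Iic (-N) ∪ Ioc (-N) 0 = Iic (0:ℝ) := Iic_union_Ioc_eq_Iic (by linarith)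
  have hintg : IntegrableOn g (Iic (0:ℝ)) := by
    rw [← hunion]; exact hint2g.union hint1g
  -- pointwise bound
  have hbound : ∀ s ∈ Iic (0:ℝ), |(1 - s) ^ (1 - α) - (N - s) ^ (1 - α)| ^ q ≤ g s := by
    intro s hs
    have hs0 : s ≤ 0 := mem_Iic.mp hs
    have hx0 : (0:ℝ) < 1 - s := by linarith
    have hxy : 1 - s ≤ N - s := by linarith
    have hmono : (N - s) ^ (1 - α) ≤ (1 - s) ^ (1 - α) :=
      rpow_le_rpow_of_nonpos hx0 hxy hr1.le
    have hnn : 0 ≤ (1 - s) ^ (1 - α) - (N - s) ^ (1 - α) := sub_nonneg.mpr hmono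
    rw [abs_of_nonneg hnn]
    by_cases hcase : s ≤ -N
    · -- Bernoulli branch
      have hkey : (1 - s) ^ (1 - α) - (N - s) ^ (1 - α) ≤ (α - 1) * N * (1 - s) ^ (-α) := by
        set t : ℝ := (N - 1) / (1 - s) with htdef
        have ht0 : 0 ≤ t := div_nonneg (by linarith) hx0.le
        have hb := bern_neg ht0 hr2 hr1.le
        have hfac : N - s = (1 - s) * (1 + t) := by
          rw [htdef, mul_add, mul_div_cancel₀ _ hx0.ne']; ring
        have hrw : (N - s) ^ (1 - α) = (1 - s) ^ (1 - α) * (1 + t) ^ (1 - α) := by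
          rw [hfac, mul_rpow hx0.le (by linarith : (0:ℝ) ≤ 1 + t)]
        rw [hrw]
        have h3 : 1 - (1 + t) ^ (1 - α) ≤ (α - 1) * t := by nlinarith [hb]
        have h4 : (1 - s) ^ (1 - α) * (1 - (1 + t) ^ (1 - α)) ≤
            (1 - s) ^ (1 - α) * ((α - 1) * t) :=
          mul_le_mul_of_nonneg_left h3 (rpow_nonneg hx0.le _)
        have h5 : (1 - s) ^ (1 - α) * t = (N - 1) * (1 - s) ^ (-α) := by
          have h51 : (1 - s) ^ (1 - α) = (1 - s) ^ (-α) * (1 - s) := by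
            rw [show (1:ℝ) - α = -α + 1 by ring, rpow_add hx0, rpow_one]
          have h52 : (1 - s) * ((N - 1) / (1 - s)) = N - 1 := by
            field_simp
          rw [h51, htdef, mul_assoc, h52]
          ring
        have h6 : (0:ℝ) ≤ (1 - s) ^ (-α) := rpow_nonneg hx0.le _
        calc (1 - s) ^ (1 - α) - (1 - s) ^ (1 - α) * (1 + t) ^ (1 - α)
            = (1 - s) ^ (1 - α) * (1 - (1 + t) ^ (1 - α)) := by ring
          _ ≤ (1 - s) ^ (1 - α) * ((α - 1) * t) := h4
          _ = (α - 1) * ((1 - s) ^ (1 - α) * t) := by ring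
          _ = (α - 1) * ((N - 1) * (1 - s) ^ (-α)) := by rw [h5]
          _ ≤ (α - 1) * N * (1 - s) ^ (-α) := by nlinarith
      have hstep := rpow_le_rpow hnn hkey hq0.le
      refine hstep.trans ?_
      have hrw2 : ((α - 1) * N * (1 - s) ^ (-α)) ^ q = ((α - 1) * N) ^ q * (1 - s) ^ p2 := by
        rw [mul_rpow (by nlinarith : (0:ℝ) ≤ (α - 1) * N) (rpow_nonneg hx0.le _),
          ← rpow_mul hx0.le, hp2def, neg_mul]
      rw [hrw2]
      simp only [hg, if_pos hcase, le_refl]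
    · -- easy branch
      have hkey : (1 - s) ^ (1 - α) - (N - s) ^ (1 - α) ≤ (1 - s) ^ (1 - α) := by
        have : (0:ℝ) ≤ (N - s) ^ (1 - α) := rpow_nonneg (by linarith) _
        linarith
      have hstep := rpow_le_rpow hnn hkey hq0.le
      refine hstep.trans ?_
      rw [← rpow_mul hx0.le, mul_comm (1 - α) q]
      simp only [hg, if_neg hcase, le_refl]
  -- integral comparison
  have hcomp : (∫ s in Iic (0:ℝ), |(1 - s) ^ (1 - α) - (N - s) ^ (1 - α)| ^ q) ≤
      ∫ s in Iic (0:ℝ), g s := by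
    refine integral_mono_of_nonneg ?_ hintg ?_
    · exact Filter.Eventually.of_forall fun s => rpow_nonneg (abs_nonneg _) q
    · exact (ae_restrict_iff' measurableSet_Iic).mpr (Filter.Eventually.of_forall hbound)
  refine hcomp.trans ?_
  -- split the integral
  have hsplit : ∫ s in Iic (0:ℝ), g s =
      (∫ s in Iic (-N), g s) + ∫ s in Ioc (-N) 0, g s := by
    rw [← hunion]
    exact setIntegral_union (Iic_disjoint_Ioc le_rfl) measurableSet_Ioc hint2g hint1g
  rw [hsplit]
  -- compute the two pieces
  have hJ2 : ∫ s in Iic (-N), g s =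
      (α - 1) ^ q * N ^ q * ((1 + N) ^ (p2 + 1) / (α * q - 1)) := by
    rw [setIntegral_congr_fun measurableSet_Iic
      (g := fun s => ((α - 1) * N) ^ q * (1 - s) ^ p2) ?_]
    · rw [integral_const_mul, hval2, sub_neg_eq_add,
        mul_rpow (by linarith : (0:ℝ) ≤ α - 1) hN0.le, hp2e]
      rw [div_neg, neg_neg]
    · intro s hs
      simp only [hg, if_pos (mem_Iic.mp hs)]
  have hJ1 : ∫ s in Ioc (-N) 0, g s = ((1 + N) ^ e - 1) / e := by
    rw [setIntegral_congr_fun measurableSet_Ioc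
      (g := fun s => (1 - s) ^ (q * (1 - α))) ?_]
    · rw [← intervalIntegral.integral_of_le (by linarith : -N ≤ (0:ℝ))]
      have := intervalIntegral.integral_comp_sub_left
        (a := -N) (b := (0:ℝ)) (fun x : ℝ => x ^ (q * (1 - α))) 1
      simp only [sub_zero, sub_neg_eq_add] at this
      rw [this, integral_rpow (Or.inl hp1), one_rpow, he_def]
    · intro s hs
      simp only [hg, if_neg (not_le.mpr hs.1)]
  rw [hJ1, hJ2]
  -- final estimates
  have hNe : (0:ℝ) ≤ N ^ e := rpow_nonneg hN0.le _
  have h2e : (1 + N) ^ e ≤ 2 ^ e * N ^ e := by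
    rw [← mul_rpow (by norm_num : (0:ℝ) ≤ 2) hN0.le]
    exact rpow_le_rpow (by linarith) (by linarith) he.le
  have hB1 : ((1 + N) ^ e - 1) / e ≤ 2 ^ e / e * N ^ e := by
    rw [div_le_iff₀ he]
    calc (1 + N) ^ e - 1 ≤ (1 + N) ^ e := by linarith
      _ ≤ 2 ^ e * N ^ e := h2e
      _ = 2 ^ e / e * N ^ e * e := by field_simp
  have hB2 : (α - 1) ^ q * N ^ q * ((1 + N) ^ (p2 + 1) / (α * q - 1)) ≤
      (α - 1) ^ q / (α * q - 1) * N ^ e := by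
    have h1 : (1 + N) ^ (p2 + 1) ≤ N ^ (p2 + 1) :=
      rpow_le_rpow_of_nonpos hN0 (by linarith) (by linarith)
    have h2 : N ^ q * N ^ (p2 + 1) = N ^ e := by
      rw [← rpow_add hN0, he_def, hp2def]
      ring_nf
    have h3 : (0:ℝ) ≤ (α - 1) ^ q := rpow_nonneg (by linarith) _
    have h4 : (0:ℝ) ≤ N ^ q := rpow_nonneg hN0.le _
    calc (α - 1) ^ q * N ^ q * ((1 + N) ^ (p2 + 1) / (α * q - 1))
        ≤ (α - 1) ^ q * N ^ q * (N ^ (p2 + 1) / (α * q - 1)) := by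
          apply mul_le_mul_of_nonneg_left _ (mul_nonneg h3 h4)
          exact (div_le_div_iff_of_pos_right hD).mpr h1
      _ = (α - 1) ^ q / (α * q - 1) * (N ^ q * N ^ (p2 + 1)) := by ring
      _ = (α - 1) ^ q / (α * q - 1) * N ^ e := by rw [h2]
  calc (α - 1) ^ q * N ^ q * ((1 + N) ^ (p2 + 1) / (α * q - 1)) + ((1 + N) ^ e - 1) / e
      ≤ (α - 1) ^ q / (α * q - 1) * N ^ e + 2 ^ e / e * N ^ e := add_le_add hB2 hB1
    _ = (2 ^ e / e + (α - 1) ^ q / (α * q - 1)) * N ^ e := by ring
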